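/- Every complex eigenvalue μ of the matrix A satisfies |μ| ≤ 1 − min_j b_j, and there exists a complex eigenvalue μ₀ of A with |μ₀| ≥ 1 − max_j b_j; in particular, when b j = 0 for all j, A = F and has spectral radius equal to 1. -/

import Mathlib

open Matrix Finset
open scoped NNReal ENNReal

section Aux

variable {n : ℕ}

/-- Entry evaluation is bounded for the `L∞` operator norm. -/
lemma aux_entry_norm_le (i j : Fin n)
    (M : Matrix (Fin n) (Fin n) ℝ) :
    ‖M i j‖ ≤ @norm _ (Matrix.linftyOpNormedRing (α := ℝ)).toNorm M := by
  letI := Matrix.linftyOpNormedRing (α := ℝ) (n := Fin n)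
  rw [Matrix.linfty_opNorm_def]
  calc ‖M i j‖ = ((‖M i j‖₊ : ℝ≥0) : ℝ) := (coe_nnnorm _).symm
    _ ≤ ((∑ j', ‖M i j'‖₊ : ℝ≥0) : ℝ) := by
        exact_mod_cast Finset.single_le_sum
          (f := fun j' => ‖M i j'‖₊) (fun _ _ => by positivity) (Finset.mem_univ j)
    _ ≤ _ := by
        exact_mod_cast Finset.le_sup (f := fun i => ∑ j', ‖M i j'‖₊) (Finset.mem_univ i)

end Aux

/-- Every complex eigenvalue `μ` of `A` satisfies
`|μ| ≤ 1 − min_j b_j`, and there exists a complex eigenvalue `μ₀` of `A` with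
`|μ₀| ≥ 1 − max_j b_j`; in particular, when `b j = 0` for all `j`, `A = F` and
`A` has spectral radius equal to `1`. -/
theorem stmt_8 (n : ℕ) (hn : 1 ≤ n)
    (hne : (Finset.univ : Finset (Fin n)).Nonempty)
    (F : Matrix (Fin n) (Fin n) ℝ)
    (hFnonneg : ∀ i j, 0 ≤ F i j)
    (hFrow : ∀ i, ∑ j, F i j = 1)
    (b : Fin n → ℝ) (hb0 : ∀ j, 0 ≤ b j) (hb1 : ∀ j, b j < 1)
    (K : Matrix (Fin n) (Fin n) ℝ)
    (hK : ∀ i j, K i j = F i j * b j)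
    (hInv : IsUnit (1 - K))
    (S : Matrix (Fin n) (Fin n) ℝ)
    (hS : S = (1 - K)⁻¹ * F)
    (A : Matrix (Fin n) (Fin n) ℝ)
    (hA : ∀ i j, A i j = (1 - b i) * S i j * (1 - b j)) :
    (∀ μ : ℂ, μ ∈ spectrum ℂ (A.map Complex.ofReal) →
        ‖μ‖ ≤ 1 - Finset.univ.inf' hne b) ∧
    (∃ μ₀ : ℂ, μ₀ ∈ spectrum ℂ (A.map Complex.ofReal) ∧
        1 - Finset.univ.sup' hne b ≤ ‖μ₀‖) ∧
    ((∀ j, b j = 0) → A = F ∧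
        IsGreatest ((fun z : ℂ => ‖z‖) '' spectrum ℂ (A.map Complex.ofReal)) 1) := by
  classical
  have i0 : Fin n := ⟨0, hn⟩
  set B : ℝ := Finset.univ.sup' hne b with hBdef
  set binf : ℝ := Finset.univ.inf' hne b with hbinfdef
  have hbleB : ∀ j, b j ≤ B := fun j => Finset.le_sup' b (Finset.mem_univ j)
  have hinfle : ∀ j, binf ≤ b j := fun j => Finset.inf'_le b (Finset.mem_univ j)
  have hB0 : 0 ≤ B := le_trans (hb0 i0) (hbleB i0)
  have hBlt : B < 1 := by
    rw [hBdef, Finset.sup'_lt_iff]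
    exact fun i _ => hb1 i
  have hinf0 : 0 ≤ binf := Finset.le_inf' hne _ fun j _ => hb0 j
  letI instR : NormedRing (Matrix (Fin n) (Fin n) ℝ) := Matrix.linftyOpNormedRing
  letI instC : NormedRing (Matrix (Fin n) (Fin n) ℂ) := Matrix.linftyOpNormedRing
  letI instCA : NormedAlgebra ℂ (Matrix (Fin n) (Fin n) ℂ) := Matrix.linftyOpNormedAlgebra
  haveI : Nonempty (Fin n) := ⟨i0⟩
  haveI : CompleteSpace (Matrix (Fin n) (Fin n) ℝ) := FiniteDimensional.complete ℝ _
  haveI : CompleteSpace (Matrix (Fin n) (Fin n) ℂ) := FiniteDimensional.complete ℂ _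
  -- ‖K‖ < 1
  have hKn : ‖K‖ < 1 := by
    have hrow : ∀ i, (∑ j, ‖K i j‖₊ : ℝ≥0) < 1 := by
      intro i
      rw [← NNReal.coe_lt_coe]
      push_cast
      have h1 : ∑ j, ‖K i j‖ = ∑ j, F i j * b j := by
        refine Finset.sum_congr rfl fun j _ => ?_
        rw [hK, Real.norm_eq_abs, abs_of_nonneg (mul_nonneg (hFnonneg i j) (hb0 j))]
      calc ∑ j, ‖K i j‖ = ∑ j, F i j * b j := h1
        _ ≤ ∑ j, F i j * B := Finset.sum_le_sum fun j _ =>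
            mul_le_mul_of_nonneg_left (hbleB j) (hFnonneg i j)
        _ = B := by rw [← Finset.sum_mul, hFrow, one_mul]
        _ < 1 := hBlt
    have : ‖K‖₊ < 1 := by
      rw [Matrix.linfty_opNNNorm_def]
      exact Finset.sup_lt_iff (by norm_num : (⊥ : ℝ≥0) < 1) |>.mpr
        fun i _ => hrow i
    exact_mod_cast this
  -- nonnegativity of powers of K
  have hKpow : ∀ p : ℕ, ∀ i j, 0 ≤ (K ^ p) i j := by
    intro p
    induction p with
    | zero => intro i j; simp [Matrix.one_apply]; positivity
    | succ p ih =>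
      intro i j
      rw [pow_succ, Matrix.mul_apply]
      exact Finset.sum_nonneg fun k _ => mul_nonneg (ih i k)
        (by rw [hK]; exact mul_nonneg (hFnonneg k j) (hb0 j))
  -- nonnegativity of the inverse of (1 - K)
  have hInvnn : ∀ i j, 0 ≤ (1 - K)⁻¹ i j := by
    intro i j
    have hgeom : HasSum (fun p : ℕ => K ^ p) (Ring.inverse (1 - K)) :=
      letI : NormedAlgebra ℝ (Matrix (Fin n) (Fin n) ℝ) := Matrix.linftyOpNormedAlgebra
      haveI : CompleteSpace (Matrix (Fin n) (Fin n) ℝ) := FiniteDimensional.complete ℝ _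
      hasSum_geom_series_inverse K hKn
    let L : Matrix (Fin n) (Fin n) ℝ →ₗ[ℝ] ℝ :=
      { toFun := fun M => M i j
        map_add' := fun _ _ => rfl
        map_smul' := fun _ _ => rfl }
    let e : Matrix (Fin n) (Fin n) ℝ →L[ℝ] ℝ :=
      LinearMap.mkContinuous L 1 (fun M => by
        show ‖M i j‖ ≤ 1 * ‖M‖; simpa using aux_entry_norm_le i j M)
    have hentry : HasSum (fun p : ℕ => (K ^ p) i j) (Ring.inverse (1 - K) i j) :=
      e.hasSum hgeom
    have h0 : 0 ≤ Ring.inverse (1 - K) i j :=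
      hentry.nonneg fun p => hKpow p i j
    rwa [Matrix.nonsing_inv_eq_ringInverse]
  -- nonnegativity of S and A
  have hSnn : ∀ i j, 0 ≤ S i j := by
    intro i j
    rw [hS, Matrix.mul_apply]
    exact Finset.sum_nonneg fun k _ => mul_nonneg (hInvnn i k) (hFnonneg k j)
  have hAnn : ∀ i j, 0 ≤ A i j := by
    intro i j
    rw [hA]
    have h1 : 0 ≤ 1 - b i := le_of_lt (by linarith [hb1 i])
    have h2 : 0 ≤ 1 - b j := le_of_lt (by linarith [hb1 j])
    exact mul_nonneg (mul_nonneg h1 (hSnn i j)) h2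
  -- row sums of S against (1 - b)
  have hdet : IsUnit (1 - K).det := (Matrix.isUnit_iff_isUnit_det _).mp hInv
  have hSrow : ∀ i, ∑ j, S i j * (1 - b j) = 1 := by
    have h1 : F *ᵥ (fun j => 1 - b j) = (1 - K) *ᵥ (fun _ => (1 : ℝ)) := by
      funext i
      simp only [Matrix.mulVec, dotProduct, Matrix.sub_apply, Matrix.one_apply]
      have lhs : ∑ j, F i j * (1 - b j) = 1 - ∑ j, F i j * b j := by
        simp_rw [mul_sub, mul_one]
        rw [Finset.sum_sub_distrib, hFrow]
      have rhs : ∑ j, ((if i = j then (1:ℝ) else 0) - K i j) * 1 =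
          1 - ∑ j, F i j * b j := by
        simp [mul_one, hK, Finset.sum_sub_distrib]
      rw [lhs, rhs]
    have h2 : S *ᵥ (fun j => 1 - b j) = fun _ => (1 : ℝ) := by
      rw [hS, ← Matrix.mulVec_mulVec, h1, Matrix.mulVec_mulVec,
        Matrix.nonsing_inv_mul _ hdet, Matrix.one_mulVec]
    intro i
    have := congrFun h2 i
    simpa [Matrix.mulVec, dotProduct] using this
  -- row sums of A
  have hArow : ∀ i, ∑ j, A i j = 1 - b i := by
    intro i
    calc ∑ j, A i j = (1 - b i) * ∑ j, S i j * (1 - b j) := by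
          rw [Finset.mul_sum]
          exact Finset.sum_congr rfl fun j _ => by rw [hA, mul_assoc]
      _ = 1 - b i := by rw [hSrow, mul_one]
  -- Part 1: upper bound on eigenvalues
  have hpart1 : ∀ μ : ℂ, μ ∈ spectrum ℂ (A.map Complex.ofReal) →
      ‖μ‖ ≤ 1 - binf := by
    intro μ hμ
    set M := A.map Complex.ofReal with hMdef
    have hdet0 : (algebraMap ℂ (Matrix (Fin n) (Fin n) ℂ) μ - M).det = 0 := by
      by_contra hd
      exact (spectrum.mem_iff.mp hμ)
        ((Matrix.isUnit_iff_isUnit_det _).mpr (isUnit_iff_ne_zero.mpr hd))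
    obtain ⟨v, hv0, hveq⟩ := (Matrix.exists_mulVec_eq_zero_iff).mpr hdet0
    have heig : M *ᵥ v = μ • v := by
      rw [Algebra.algebraMap_eq_smul_one, Matrix.sub_mulVec,
        Matrix.smul_mulVec, Matrix.one_mulVec, sub_eq_zero] at hveq
      exact hveq.symm
    obtain ⟨i, -, hmax⟩ := Finset.exists_max_image Finset.univ
      (fun k => ‖v k‖) hne
    have hvi : 0 < ‖v i‖ := by
      obtain ⟨k, hk⟩ := Function.ne_iff.mp hv0
      exact lt_of_lt_of_le (by simpa using hk) (hmax k (Finset.mem_univ k))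
    have key : ‖μ‖ * ‖v i‖ ≤ (1 - b i) * ‖v i‖ := by
      calc ‖μ‖ * ‖v i‖
          = ‖(M *ᵥ v) i‖ := by
            rw [heig]; simp [norm_mul]
        _ = ‖∑ j, (A i j : ℂ) * v j‖ := by
            simp [Matrix.mulVec, dotProduct, hMdef, Matrix.map_apply]
        _ ≤ ∑ j, ‖(A i j : ℂ) * v j‖ :=
            norm_sum_le _ _
        _ = ∑ j, A i j * ‖v j‖ := by
            refine Finset.sum_congr rfl fun j _ => ?_
            rw [norm_mul, Complex.norm_real, Real.norm_eq_abs, abs_of_nonneg (hAnn i j)]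
        _ ≤ ∑ j, A i j * ‖v i‖ := Finset.sum_le_sum fun j _ =>
            mul_le_mul_of_nonneg_left (hmax j (Finset.mem_univ j)) (hAnn i j)
        _ = (1 - b i) * ‖v i‖ := by rw [← Finset.sum_mul, hArow]
    have h1 : ‖μ‖ ≤ 1 - b i := le_of_mul_le_mul_right key hvi
    linarith [hinfle i]
  refine ⟨hpart1, ?_, ?_⟩
  · -- Part 2: existence of a large eigenvalue
    set M := A.map Complex.ofReal with hMdef
    set c : ℝ≥0 := (1 - B).toNNReal with hcdef
    have hc : (c : ℝ) = 1 - B := Real.coe_toNNReal _ (by linarith)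
    -- row-sum lower bound for powers of A
    have hApow : ∀ p : ℕ, (∀ i j, 0 ≤ (A ^ p) i j) ∧
        (∀ i, (1 - B) ^ p ≤ ∑ j, (A ^ p) i j) := by
      intro p
      induction p with
      | zero =>
        constructor
        · intro i j; simp [Matrix.one_apply]; positivity
        · intro i; simp [Matrix.one_apply]
      | succ p ih =>
        obtain ⟨ihn, ihs⟩ := ih
        constructor
        · intro i j
          rw [pow_succ, Matrix.mul_apply]
          exact Finset.sum_nonneg fun k _ => mul_nonneg (ihn i k) (hAnn k j)
        · intro i
          have : ∑ j, (A ^ (p+1)) i j = ∑ k, (A ^ p) i k * (1 - b k) := by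
            simp_rw [pow_succ, Matrix.mul_apply]
            rw [Finset.sum_comm]
            exact Finset.sum_congr rfl fun k _ => by
              rw [← Finset.mul_sum, hArow]
          rw [this]
          calc (1 - B) ^ (p + 1) = (1 - B) ^ p * (1 - B) := by ring
            _ ≤ (∑ k, (A ^ p) i k) * (1 - B) :=
                mul_le_mul_of_nonneg_right (ihs i) (by linarith)
            _ = ∑ k, (A ^ p) i k * (1 - B) := Finset.sum_mul _ _ _
            _ ≤ ∑ k, (A ^ p) i k * (1 - b k) := Finset.sum_le_sum fun k _ =>
                mul_le_mul_of_nonneg_left (by linarith [hbleB k]) (ihn i k)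
    -- norm lower bound for powers of M
    have hnormge : ∀ p : ℕ, (c : ℝ≥0) ^ p ≤ ‖M ^ p‖₊ := by
      intro p
      have hMp : M ^ p = (A ^ p).map Complex.ofReal := by
        have h := map_pow (Complex.ofRealHom.mapMatrix (m := Fin n)) A p
        exact h.symm
      rw [hMp, Matrix.linfty_opNNNorm_def]
      refine le_trans ?_ (Finset.le_sup (f := fun i => ∑ j, ‖(A ^ p).map Complex.ofReal i j‖₊)
        (Finset.mem_univ i0))
      rw [← NNReal.coe_le_coe]
      push_cast
      calc ((c : ℝ)) ^ p = (1 - B) ^ p := by rw [hc]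
        _ ≤ ∑ j, (A ^ p) i0 j := (hApow p).2 i0
        _ = ∑ j, ‖(A ^ p).map Complex.ofReal i0 j‖ := by
            refine Finset.sum_congr rfl fun j _ => ?_
            rw [Matrix.map_apply, Complex.norm_real, Real.norm_eq_abs,
              abs_of_nonneg ((hApow p).1 i0 j)]
    have hsr : (c : ℝ≥0∞) ≤ spectralRadius ℂ M := by
      refine ge_of_tendsto (spectrum.pow_nnnorm_pow_one_div_tendsto_nhds_spectralRadius M) ?_
      filter_upwards [Filter.eventually_ge_atTop 1] with p hp
      have hp0 : (p : ℝ) ≠ 0 := by positivity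
      calc (c : ℝ≥0∞) = ((c : ℝ≥0∞) ^ (p : ℕ)) ^ (1 / (p : ℝ)) := by
            rw [← ENNReal.rpow_natCast, ← ENNReal.rpow_mul,
              mul_one_div_cancel hp0, ENNReal.rpow_one]
        _ ≤ ((‖M ^ p‖₊ : ℝ≥0∞)) ^ (1 / (p : ℝ)) := by
            apply ENNReal.rpow_le_rpow _ (by positivity)
            exact_mod_cast hnormge p
    obtain ⟨μ₀, hμ₀mem, hμ₀⟩ := spectrum.exists_nnnorm_eq_spectralRadius M
    refine ⟨μ₀, hμ₀mem, ?_⟩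
    have h1 : (c : ℝ≥0∞) ≤ (‖μ₀‖₊ : ℝ≥0∞) := hμ₀ ▸ hsr
    have h2 : (c : ℝ≥0) ≤ ‖μ₀‖₊ := by exact_mod_cast h1
    calc 1 - B = (c : ℝ) := hc.symm
      _ ≤ ‖μ₀‖ := h2
      _ = ‖μ₀‖ := rfl
  · -- Part 3: the case b = 0
    intro hb
    have hK0 : K = 0 := by
      ext i j
      simp [hK, hb]
    have hS' : S = F := by
      rw [hS, hK0, sub_zero, inv_one, Matrix.one_mul]
    have hAF : A = F := by
      ext i j
      simp [hA, hb, hS']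
    refine ⟨hAF, ?_, ?_⟩
    · -- 1 is an eigenvalue
      refine ⟨1, ?_, norm_one⟩
      rw [spectrum.mem_iff]
      intro hu
      have hdetu : IsUnit (algebraMap ℂ (Matrix (Fin n) (Fin n) ℂ) 1 -
          A.map Complex.ofReal).det := (Matrix.isUnit_iff_isUnit_det _).mp hu
      have hdet0 : (algebraMap ℂ (Matrix (Fin n) (Fin n) ℂ) 1 -
          A.map Complex.ofReal).det = 0 := by
        rw [← Matrix.exists_mulVec_eq_zero_iff]
        refine ⟨fun _ => 1, fun h => one_ne_zero (congrFun h i0), ?_⟩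
        funext i
        rw [Algebra.algebraMap_eq_smul_one, Matrix.sub_mulVec,
          Matrix.smul_mulVec, Matrix.one_mulVec]
        have : ((A.map Complex.ofReal) *ᵥ fun _ => (1:ℂ)) i = 1 := by
          simp only [Matrix.mulVec, dotProduct, Matrix.map_apply, mul_one]
          rw [← Complex.ofReal_sum]
          rw [hArow i, hb i]
          norm_num
        simp [this]
      rw [hdet0] at hdetu
      exact not_isUnit_zero hdetu
    · -- upper bound
      rintro x ⟨μ, hμ, rfl⟩
      have h1 := hpart1 μ hμ
      have hbinf0 : binf = 0 := le_antisymm (by rw [← hb i0]; exact hinfle i0) hinf0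
      rw [hbinf0] at h1
      linarith
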